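/- In the CWC elimination loop, a feature F_{π(i)} is retained (not removed at step i) if and only if there exists a positive-negative pair (p,q) such that B_{π(i)} distinguishes (p,q) but no feature that has not yet been processed and no feature already retained distinguishes (p,q). Formally, with S_i the set of retained features among {F_{π(1)},…,F_{π(i−1)}} and T_i = {F_{π(i+1)},…,F_{π(k)}}, F_{π(i)} is retained iff S_i ∪ T_i is inconsistent. -/

import Mathlib

noncomputable section
open Classical

def Consistent {α ι : Type*} (D : Finset α) (feat : α → ι → Bool) (cls : α → Bool)
    (F' : Finset ι) : Prop :=
  ∀ x ∈ D, ∀ y ∈ D, (∀ i ∈ F', feat x i = feat y i) → cls x = cls y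

def cwcStep {α ι : Type*} [DecidableEq ι] (D : Finset α) (feat : α → ι → Bool)
    (cls : α → Bool) (S : Finset ι) (f : ι) : Finset ι :=
  if Consistent D feat cls (S.erase f) then S.erase f else S

def cwc {α ι : Type*} [DecidableEq ι] (D : Finset α) (feat : α → ι → Bool)
    (cls : α → Bool) (F : Finset ι) {k : ℕ} (π : Fin k → ι) : Finset ι :=
  (List.ofFn π).foldl (cwcStep D feat cls) F

end

/-- `F_{π i}` is retained by CWC (i.e. belongs to the final output) iff the
union of the features retained among the first `i` processed ones (`Sᵢ`) and
the not-yet-processed features (`Tᵢ`) is inconsistent.  Here `Sᵢ` is the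
partial fold after `i` steps minus the unprocessed features, and
`Tᵢ = {π j : j > i}` (zero-based indexing). -/
theorem stmt_6 {α ι : Type*} [DecidableEq ι] (D : Finset α)
    (feat : α → ι → Bool) (cls : α → Bool)
    {k : ℕ} (F : Finset ι) (π : Fin k → ι)
    (hπinj : Function.Injective π) (hπF : ∀ i, π i ∈ F) (hπsurj : ∀ f ∈ F, ∃ i, π i = f)
    (hF : Consistent D feat cls F) (i : Fin k) :
    π i ∈ cwc D feat cls F π ↔
      ¬ Consistent D feat cls
        ((((List.ofFn π).take (i : ℕ)).foldl (cwcStep D feat cls) F \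
            ((List.ofFn π).drop (i : ℕ)).toFinset) ∪
          ((List.ofFn π).drop ((i : ℕ) + 1)).toFinset) := by
  classical
  set P := cwcStep D feat cls with hP
  set L := List.ofFn π with hLdef
  have hL : L.length = k := by simp [hLdef]
  have hnodup : L.Nodup := List.nodup_ofFn.mpr hπinj
  set G : ℕ → Finset ι := fun j => (L.take j).foldl P F with hG
  -- basic facts about cwcStep
  have memP : ∀ (S : Finset ι) (f x : ι), x ≠ f → (x ∈ P S f ↔ x ∈ S) := by
    intro S f x hx
    simp only [hP, cwcStep]
    split <;> simp [Finset.mem_erase, hx]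
  have eraseP : ∀ (S : Finset ι) (f : ι), S.erase f ⊆ P S f := by
    intro S f
    simp only [hP, cwcStep]
    split
    · exact Finset.Subset.refl _
    · exact Finset.erase_subset f S
  -- indexed element
  have hgetL : ∀ (j : ℕ) (hj : j < k), L[j]'(by omega) = π ⟨j, hj⟩ := by
    intro j hj
    simp [hLdef, List.getElem_ofFn]
  -- step formula
  have hstep : ∀ (j : ℕ) (hj : j < k), G (j + 1) = P (G j) (π ⟨j, hj⟩) := by
    intro j hj
    have h1 : L.take (j + 1) = L.take j ++ [π ⟨j, hj⟩] := by
      rw [List.take_succ, List.getElem?_eq_getElem (by omega), hgetL j hj]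
      rfl
    simp [hG, h1, List.foldl_append]
  -- saturation
  have hGk : ∀ j, k ≤ j → G j = G k := by
    intro j hj
    simp [hG, List.take_of_length_le (by omega : L.length ≤ j),
      List.take_of_length_le (le_of_eq hL)]
  -- drop cons
  have hdropcons : ∀ (j : ℕ) (hj : j < k), L.drop j = π ⟨j, hj⟩ :: L.drop (j + 1) := by
    intro j hj
    rw [List.drop_eq_getElem_cons (by omega), hgetL j hj]
  -- π j not in drop (j+1)
  have hnotmem : ∀ (j : ℕ) (hj : j < k), π ⟨j, hj⟩ ∉ L.drop (j + 1) := by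
    intro j hj hmem
    have h := hnodup.sublist (List.drop_sublist j L)
    rw [hdropcons j hj] at h
    exact (List.nodup_cons.mp h).1 hmem
  -- drop j ⊆ G j
  have hdropsub : ∀ j, (L.drop j).toFinset ⊆ G j := by
    intro j
    induction j with
    | zero =>
      intro x hx
      simp only [List.drop_zero, List.mem_toFinset, hLdef, List.mem_ofFn] at hx
      obtain ⟨t, rfl⟩ := hx
      simpa [hG] using hπF t
    | succ j ih =>
      by_cases hj : j < k
      · intro x hx
        rw [hstep j hj]
        have hxG : x ∈ G j := by
          apply ih
          rw [List.mem_toFinset, hdropcons j hj]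
          exact List.mem_cons_of_mem _ (List.mem_toFinset.mp hx)
        have hxne : x ≠ π ⟨j, hj⟩ := by
          intro h
          exact hnotmem j hj (h ▸ List.mem_toFinset.mp hx)
        exact eraseP _ _ (Finset.mem_erase.mpr ⟨hxne, hxG⟩)
      · intro x hx
        rw [List.drop_eq_nil_of_le (by omega : L.length ≤ j + 1)] at hx
        simp at hx
  -- membership stability after step j
  have hstable : ∀ (x : ι), (∀ t : Fin k, (i : ℕ) + 1 ≤ (t : ℕ) → π t ≠ x) →
      ∀ j, (i : ℕ) + 1 ≤ j → (x ∈ G j ↔ x ∈ G ((i : ℕ) + 1)) := by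
    intro x hx j hj
    induction j with
    | zero => omega
    | succ j ih =>
      rcases Nat.lt_or_ge j ((i : ℕ) + 1) with h | h
      · have : j + 1 = (i : ℕ) + 1 := by omega
        rw [this]
      · by_cases hjk : j < k
        · rw [hstep j hjk, memP _ _ _ (fun h' => hx ⟨j, hjk⟩ (by simp only [Fin.val_mk]; omega) h'.symm)]
          exact ih h
        · have h1 : G (j + 1) = G k := hGk _ (by omega)
          have h2 : G j = G k := hGk _ (by omega)
          rw [h1, ← h2]
          exact ih h
  -- final set is G k
  have hfinal : cwc D feat cls F π = G k := by
    simp [cwc, hG, List.take_of_length_le (le_of_eq hL), hLdef, hP,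
      List.take_of_length_le (by simp : (List.ofFn π).length ≤ k)]
  -- π i ∈ final ↔ π i ∈ G (i+1)
  have hiff1 : π i ∈ cwc D feat cls F π ↔ π i ∈ G ((i : ℕ) + 1) := by
    rw [hfinal]
    exact hstable (π i) (fun t ht h => by
      have := hπinj h
      omega) k (by omega)
  -- π i ∈ G i (since π i ∈ drop i ⊆ G i)
  have hmemGi : π i ∈ G (i : ℕ) := by
    apply hdropsub (i : ℕ)
    rw [List.mem_toFinset, hdropcons (i : ℕ) i.2]
    exact List.mem_cons_self
  -- erase equality
  have herase : (G (i : ℕ)).erase (π i) =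
      (G (i : ℕ) \ (L.drop (i : ℕ)).toFinset) ∪ (L.drop ((i : ℕ) + 1)).toFinset := by
    ext x
    simp only [Finset.mem_erase, Finset.mem_union, Finset.mem_sdiff, List.mem_toFinset,
      hdropcons (i : ℕ) i.2, List.mem_cons]
    constructor
    · rintro ⟨hne, hxG⟩
      by_cases hx : x ∈ L.drop ((i : ℕ) + 1)
      · exact Or.inr hx
      · exact Or.inl ⟨hxG, fun h => h.elim (fun h' => hne (by simpa using h')) hx⟩
    · rintro (⟨hxG, hx⟩ | hx)
      · exact ⟨fun h => hx (Or.inl (by simpa using h)), hxG⟩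
      · refine ⟨fun h => hnotmem (i : ℕ) i.2 (by simpa [← h] using hx), ?_⟩
        exact hdropsub (i : ℕ) (List.mem_toFinset.mpr
          (by rw [hdropcons (i : ℕ) i.2]; exact List.mem_cons_of_mem _ hx))
  have hi2 : π i = π ⟨(i : ℕ), i.2⟩ := by simp
  -- finish
  rw [hiff1, hstep (i : ℕ) i.2, ← hi2]
  simp only [hP, cwcStep, ← herase]
  split
  · next hcons => simp [Finset.mem_erase, hcons]; rw [herase] at hcons; exact hcons
  · next hcons => simp [hmemGi, hcons]; rw [herase] at hcons; exact hcons
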